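/- Let H_2 be the 4-vertex graph with edges v1v2, v1v3, v1v4, v2v3, endowed with the path metric. Then at p = log₂(2+√3), the p-distance matrix D_p of H_2 is invertible and satisfies ⟨D_p^{-1}1, 1⟩ = 0; consequently there exists a nonzero vector α with ⟨α,1⟩ = 0 and ⟨D_p α, α⟩ = 0. -/

import Mathlib

open Matrix

/-- For the graph `H₂` (edges `v₁v₂, v₁v₃, v₁v₄, v₂v₃` with the path metric), at
`p = log₂(2+√3)` the `p`-distance matrix is invertible with `⟨D_p⁻¹ 1, 1⟩ = 0`; consequently
there is a nonzero vector `α` with `⟨α, 1⟩ = 0` and `⟨D_p α, α⟩ = 0`. -/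
theorem H2_supremal
    (D : ℝ → Matrix (Fin 4) (Fin 4) ℝ)
    (hD : ∀ p, D p =
      !![0, 1, 1, 1;
         1, 0, 1, (2 : ℝ) ^ p;
         1, 1, 0, (2 : ℝ) ^ p;
         1, (2 : ℝ) ^ p, (2 : ℝ) ^ p, 0])
    (p : ℝ) (hp : p = Real.logb 2 (2 + Real.sqrt 3)) :
    IsUnit (D p) ∧ (D p)⁻¹.mulVec 1 ⬝ᵥ 1 = 0 ∧
      ∃ α : Fin 4 → ℝ, α ≠ 0 ∧ α ⬝ᵥ 1 = 0 ∧ (D p).mulVec α ⬝ᵥ α = 0 := by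
  set s : ℝ := Real.sqrt 3 with hs
  have hs_nonneg : 0 ≤ s := Real.sqrt_nonneg 3
  have hs_sq : s * s = 3 := Real.mul_self_sqrt (by norm_num)
  have ht : (2 : ℝ) ^ p = 2 + s := by
    rw [hp, hs, Real.rpow_logb (by norm_num) (by norm_num)]
    positivity
  have hDp : D p =
      !![0, 1, 1, 1;
         1, 0, 1, 2 + s;
         1, 1, 0, 2 + s;
         1, 2 + s, 2 + s, 0] := by
    rw [hD p, ht]
  -- determinant is nonzero
  have hdet : (D p).det = -(7 + 4 * s) := by
    rw [hDp]
    simp [Matrix.det_succ_row_zero, Matrix.det_fin_three, Fin.sum_univ_succ, Fin.succAbove, Fin.castSucc, Fin.castAdd, Fin.castLE]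
    ring_nf
  have hdet_ne : (D p).det ≠ 0 := by
    rw [hdet]; nlinarith [hs_nonneg]
  have hunit : IsUnit (D p) := (Matrix.isUnit_iff_isUnit_det _).2 (isUnit_iff_ne_zero.2 hdet_ne)
  refine ⟨hunit, ?_⟩
  -- the explicit solution of D α = 1
  set α : Fin 4 → ℝ := ![-1, 2 - s, 2 - s, -3 + 2 * s] with hα
  have hsolve : (D p).mulVec α = 1 := by
    funext i
    fin_cases i <;>
      simp [hDp, hα, Matrix.mulVec, dotProduct, Fin.sum_univ_four] <;>
      nlinarith [hs_sq]
  have hsum : α ⬝ᵥ 1 = 0 := by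
    simp [hα, dotProduct, Fin.sum_univ_four]
    ring
  have hinv : (D p)⁻¹.mulVec 1 = α := by
    rw [← hsolve, Matrix.mulVec_mulVec, Matrix.nonsing_inv_mul _ (isUnit_iff_ne_zero.2 hdet_ne), Matrix.one_mulVec]
  refine ⟨by rw [hinv]; exact hsum, α, ?_, hsum, ?_⟩
  · intro h
    have : α 0 = 0 := by rw [h]; rfl
    simp [hα] at this
  · rw [hsolve, dotProduct_comm]
    exact hsum
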